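/- For any u ∈ L_exp^ε(ρ₁) and v ∈ L_exp^ε(ρ₂), there exist u* ∈ L^∞(ρ₁) and v* ∈ L^∞(ρ₂) with D_ε(u,v) ≤ D_ε(u*,v*), ‖u*‖_∞ ≤ (3/2)‖c‖_∞ and ‖v*‖_∞ ≤ (3/2)‖c‖_∞. One may take u* = (v+a)^{(c,ε)} and v* = (u*)^{(c,ε)} for suitable a ∈ ℝ. -/

import Mathlib

open MeasureTheory Real

noncomputable section

/-- The entropic `(c,ε)`-transform of `u : X → ℝ`, a function on `Y`. -/
def transform {X Y : Type*} [MeasurableSpace X] (ρ₁ : Measure X)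
    (c : X → Y → ℝ) (ε : ℝ) (u : X → ℝ) : Y → ℝ :=
  fun y => -ε * Real.log (∫ x, Real.exp ((u x - c x y) / ε) ∂ρ₁)

/-- The entropic `(c,ε)`-transform of `v : Y → ℝ`, a function on `X`. -/
def transformY {X Y : Type*} [MeasurableSpace Y] (ρ₂ : Measure Y)
    (c : X → Y → ℝ) (ε : ℝ) (v : Y → ℝ) : X → ℝ :=
  fun x => -ε * Real.log (∫ y, Real.exp ((v y - c x y) / ε) ∂ρ₂)

/-- The dual Entropy–Kantorovich functional. -/
def Dfun {X Y : Type*} [MeasurableSpace X] [MeasurableSpace Y]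
    (ρ₁ : Measure X) (ρ₂ : Measure Y) (c : X → Y → ℝ) (ε : ℝ)
    (u : X → ℝ) (v : Y → ℝ) : ℝ :=
  (∫ x, u x ∂ρ₁) + (∫ y, v y ∂ρ₂)
    - ε * ∫ p, Real.exp ((u p.1 + v p.2 - c p.1 p.2) / ε) ∂(ρ₁.prod ρ₂)

section Aux

variable {X Y : Type*} [MeasurableSpace X] [MeasurableSpace Y]

lemma point_ineq (ε : ℝ) (hε : 0 < ε) (s A : ℝ) (hA : 0 < A) :
    s - ε * (Real.exp (s / ε) * A) ≤ -ε * Real.log A - ε := by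
  have h := Real.add_one_le_exp (s / ε + Real.log A)
  rw [Real.exp_add, Real.exp_log hA] at h
  have h2 : ε * (s / ε + Real.log A + 1) ≤ ε * (Real.exp (s / ε) * A) :=
    mul_le_mul_of_nonneg_left h hε.le
  have h3 : ε * (s / ε) = s := by field_simp
  nlinarith [h2, h3]

lemma inner_bounds (ρ : Measure Y) (ε M : ℝ) (hε : 0 < ε) (k : Y → ℝ)
    (hk : Measurable k) (hkM : ∀ y, |k y| ≤ M)
    (g : Y → ℝ) (hg : Measurable g)
    (hgexp : Integrable (fun y => Real.exp (g y / ε)) ρ) :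
    Integrable (fun y => Real.exp ((g y - k y) / ε)) ρ ∧
      Real.exp (-M / ε) * ∫ y, Real.exp (g y / ε) ∂ρ ≤
        ∫ y, Real.exp ((g y - k y) / ε) ∂ρ ∧
      ∫ y, Real.exp ((g y - k y) / ε) ∂ρ ≤
        Real.exp (M / ε) * ∫ y, Real.exp (g y / ε) ∂ρ := by
  have hup : ∀ y, Real.exp ((g y - k y) / ε) ≤ Real.exp (M / ε) * Real.exp (g y / ε) := by
    intro y
    rw [← Real.exp_add]
    apply Real.exp_le_exp.2
    rw [← add_div]
    apply div_le_div_of_nonneg_right ?_ hε.le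
    · linarith [(abs_le.1 (hkM y)).1]
  have hlo : ∀ y, Real.exp (-M / ε) * Real.exp (g y / ε) ≤ Real.exp ((g y - k y) / ε) := by
    intro y
    rw [← Real.exp_add]
    apply Real.exp_le_exp.2
    rw [← add_div]
    apply div_le_div_of_nonneg_right ?_ hε.le
    · linarith [(abs_le.1 (hkM y)).2]
  have hmeas : Measurable fun y => Real.exp ((g y - k y) / ε) :=
    ((hg.sub hk).div_const ε).exp
  have hint : Integrable (fun y => Real.exp ((g y - k y) / ε)) ρ := by
    refine (hgexp.const_mul (Real.exp (M / ε))).mono' hmeas.aestronglyMeasurable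
      (Filter.Eventually.of_forall fun y => ?_)
    rw [Real.norm_eq_abs, Real.abs_exp]
    exact hup y
  refine ⟨hint, ?_, ?_⟩
  · calc Real.exp (-M / ε) * ∫ y, Real.exp (g y / ε) ∂ρ
        = ∫ y, Real.exp (-M / ε) * Real.exp (g y / ε) ∂ρ := (integral_const_mul _ _).symm
      _ ≤ _ := integral_mono (hgexp.const_mul _) hint hlo
  · calc ∫ y, Real.exp ((g y - k y) / ε) ∂ρ
        ≤ ∫ y, Real.exp (M / ε) * Real.exp (g y / ε) ∂ρ :=
          integral_mono hint (hgexp.const_mul _) hup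
      _ = _ := integral_const_mul _ _

lemma log_int_bounds (ρ : Measure Y) (ε M : ℝ) (hε : 0 < ε) (k : Y → ℝ)
    (hk : Measurable k) (hkM : ∀ y, |k y| ≤ M)
    (g : Y → ℝ) (hg : Measurable g)
    (hgexp : Integrable (fun y => Real.exp (g y / ε)) ρ)
    (hgpos : 0 < ∫ y, Real.exp (g y / ε) ∂ρ) :
    |(-ε * Real.log (∫ y, Real.exp ((g y - k y) / ε) ∂ρ)) +
        ε * Real.log (∫ y, Real.exp (g y / ε) ∂ρ)| ≤ M := by
  obtain ⟨hint, hlo, hhi⟩ := inner_bounds ρ ε M hε k hk hkM g hg hgexp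
  set Z := ∫ y, Real.exp (g y / ε) ∂ρ with hZ
  set I := ∫ y, Real.exp ((g y - k y) / ε) ∂ρ with hI
  have hIpos : 0 < I := lt_of_lt_of_le (by positivity) hlo
  have h1 : Real.log I ≤ M / ε + Real.log Z := by
    have := Real.log_le_log hIpos hhi
    rwa [Real.log_mul (Real.exp_ne_zero _) hgpos.ne', Real.log_exp] at this
  have h2 : -M / ε + Real.log Z ≤ Real.log I := by
    have := Real.log_le_log (by positivity) hlo
    rwa [Real.log_mul (Real.exp_ne_zero _) hgpos.ne', Real.log_exp] at this
  have h3 : ε * (M / ε) = M := by field_simp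
  have h4 : ε * (-M / ε) = -M := by field_simp
  rw [abs_le]
  constructor
  · nlinarith [mul_le_mul_of_nonneg_left h1 hε.le]
  · nlinarith [mul_le_mul_of_nonneg_left h2 hε.le]

lemma measurable_transformY (ρ : Measure Y) [SFinite ρ] (c : X → Y → ℝ)
    (hc : Measurable (Function.uncurry c)) (ε : ℝ) (g : Y → ℝ) (hg : Measurable g) :
    Measurable (transformY ρ c ε g) := by
  have h1 : Measurable fun p : X × Y => Real.exp ((g p.2 - c p.1 p.2) / ε) :=
    (((hg.comp measurable_snd).sub hc).div_const ε).exp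
  have h2 : Measurable fun x => ∫ y, Real.exp ((g y - c x y) / ε) ∂ρ :=
    h1.stronglyMeasurable.integral_prod_right'.measurable
  exact h2.log.const_mul (-ε)

lemma prod_exp_integrable (ρ₁ : Measure X) (ρ₂ : Measure Y)
    [SFinite ρ₁] [SFinite ρ₂]
    (c : X → Y → ℝ) (hc : Measurable (Function.uncurry c))
    (M : ℝ) (hM : ∀ x y, |c x y| ≤ M) (ε : ℝ) (hε : 0 < ε)
    (f : X → ℝ) (hf : Measurable f) (hfexp : Integrable (fun x => Real.exp (f x / ε)) ρ₁)
    (g : Y → ℝ) (hg : Measurable g) (hgexp : Integrable (fun y => Real.exp (g y / ε)) ρ₂) :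
    Integrable (fun p : X × Y => Real.exp ((f p.1 + g p.2 - c p.1 p.2) / ε)) (ρ₁.prod ρ₂) := by
  have hmeas : Measurable fun p : X × Y => Real.exp ((f p.1 + g p.2 - c p.1 p.2) / ε) :=
    ((((hf.comp measurable_fst).add (hg.comp measurable_snd)).sub hc).div_const ε).exp
  have hbig : Integrable
      (fun p : X × Y => Real.exp (M / ε) * (Real.exp (f p.1 / ε) * Real.exp (g p.2 / ε)))
      (ρ₁.prod ρ₂) := (hfexp.mul_prod hgexp).const_mul _
  refine hbig.mono' hmeas.aestronglyMeasurable (Filter.Eventually.of_forall fun p => ?_)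
  rw [Real.norm_eq_abs, Real.abs_exp, ← Real.exp_add, ← Real.exp_add]
  apply Real.exp_le_exp.2
  have h1 : (f p.1 + g p.2 - c p.1 p.2) / ε ≤ (M + (f p.1 + g p.2)) / ε := by
    apply div_le_div_of_nonneg_right ?_ hε.le
    linarith [(abs_le.1 (hM p.1 p.2)).1]
  calc (f p.1 + g p.2 - c p.1 p.2) / ε ≤ (M + (f p.1 + g p.2)) / ε := h1
    _ = M / ε + (f p.1 / ε + g p.2 / ε) := by ring

lemma prod_exp_eq (ρ₁ : Measure X) (ρ₂ : Measure Y)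
    [SFinite ρ₁] [SFinite ρ₂]
    (c : X → Y → ℝ) (hc : Measurable (Function.uncurry c))
    (M : ℝ) (hM : ∀ x y, |c x y| ≤ M) (ε : ℝ) (hε : 0 < ε)
    (f : X → ℝ) (hf : Measurable f) (hfexp : Integrable (fun x => Real.exp (f x / ε)) ρ₁)
    (g : Y → ℝ) (hg : Measurable g) (hgexp : Integrable (fun y => Real.exp (g y / ε)) ρ₂) :
    ∫ p, Real.exp ((f p.1 + g p.2 - c p.1 p.2) / ε) ∂(ρ₁.prod ρ₂)
      = ∫ x, Real.exp (f x / ε) * ∫ y, Real.exp ((g y - c x y) / ε) ∂ρ₂ ∂ρ₁ := by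
  rw [MeasureTheory.integral_prod _
    (prod_exp_integrable ρ₁ ρ₂ c hc M hM ε hε f hf hfexp g hg hgexp)]
  congr 1
  funext x
  rw [← integral_const_mul]
  congr 1
  funext y
  rw [← Real.exp_add]
  congr 1
  ring

lemma improve_left (ρ₁ : Measure X) (ρ₂ : Measure Y)
    [IsProbabilityMeasure ρ₁] [IsProbabilityMeasure ρ₂]
    (c : X → Y → ℝ) (hc : Measurable (Function.uncurry c))
    (M : ℝ) (hM : ∀ x y, |c x y| ≤ M) (ε : ℝ) (hε : 0 < ε)
    (f : X → ℝ) (hf : Measurable f) (hf1 : Integrable f ρ₁)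
    (hfexp : Integrable (fun x => Real.exp (f x / ε)) ρ₁)
    (g : Y → ℝ) (hg : Measurable g)
    (hgexp : Integrable (fun y => Real.exp (g y / ε)) ρ₂)
    (hgpos : 0 < ∫ y, Real.exp (g y / ε) ∂ρ₂) :
    Dfun ρ₁ ρ₂ c ε f g ≤ (∫ x, transformY ρ₂ c ε g x ∂ρ₁) + (∫ y, g y ∂ρ₂) - ε := by
  have hcx : ∀ x, Measurable fun y => c x y := fun x => hc.comp measurable_prodMk_left
  set B : X → ℝ := fun x => ∫ y, Real.exp ((g y - c x y) / ε) ∂ρ₂ with hBdef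
  have hBpos : ∀ x, 0 < B x := fun x =>
    lt_of_lt_of_le (by positivity)
      (inner_bounds ρ₂ ε M hε (fun y => c x y) (hcx x) (fun y => hM x y) g hg hgexp).2.1
  have hint_prod := prod_exp_integrable ρ₁ ρ₂ c hc M hM ε hε f hf hfexp g hg hgexp
  have hmarg : Integrable (fun x => Real.exp (f x / ε) * B x) ρ₁ := by
    refine hint_prod.integral_prod_left.congr (Filter.Eventually.of_forall fun x => ?_)
    show (∫ y, Real.exp ((f x + g y - c x y) / ε) ∂ρ₂)
      = Real.exp (f x / ε) * ∫ y, Real.exp ((g y - c x y) / ε) ∂ρ₂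
    rw [← integral_const_mul]
    congr 1
    funext y
    rw [← Real.exp_add]
    congr 1
    ring
  have hTmeas : Measurable (transformY ρ₂ c ε g) := measurable_transformY ρ₂ c hc ε g hg
  have hTbd : ∀ x, |transformY ρ₂ c ε g x| ≤ M + |ε * Real.log (∫ y, Real.exp (g y / ε) ∂ρ₂)| := by
    intro x
    have h := log_int_bounds ρ₂ ε M hε (fun y => c x y) (hcx x) (fun y => hM x y) g hg hgexp hgpos
    have : transformY ρ₂ c ε g x =
        (-ε * Real.log (∫ y, Real.exp ((g y - c x y) / ε) ∂ρ₂)) := rfl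
    rw [this]
    set L := ε * Real.log (∫ y, Real.exp (g y / ε) ∂ρ₂)
    calc |(-ε * Real.log (∫ y, Real.exp ((g y - c x y) / ε) ∂ρ₂))|
        = |(-ε * Real.log (∫ y, Real.exp ((g y - c x y) / ε) ∂ρ₂) + L) + (-L)| := by
          congr 1; ring
      _ ≤ |(-ε * Real.log (∫ y, Real.exp ((g y - c x y) / ε) ∂ρ₂) + L)| + |(-L)| := abs_add_le _ _
      _ ≤ M + |L| := by rw [abs_neg]; exact add_le_add_left h _
  have hTint : Integrable (transformY ρ₂ c ε g) ρ₁ := by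
    refine (integrable_const (M + |ε * Real.log (∫ y, Real.exp (g y / ε) ∂ρ₂)|)).mono'
      hTmeas.aestronglyMeasurable (Filter.Eventually.of_forall fun x => ?_)
    rw [Real.norm_eq_abs]
    exact hTbd x
  have key : ∀ x, f x - ε * (Real.exp (f x / ε) * B x) ≤ transformY ρ₂ c ε g x - ε := by
    intro x
    have := point_ineq ε hε (f x) (B x) (hBpos x)
    have hT : transformY ρ₂ c ε g x = -ε * Real.log (B x) := rfl
    rw [hT]
    linarith
  have hle : ∫ x, (f x - ε * (Real.exp (f x / ε) * B x)) ∂ρ₁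
      ≤ ∫ x, (transformY ρ₂ c ε g x - ε) ∂ρ₁ :=
    integral_mono (hf1.sub ((hmarg.const_mul ε))) (hTint.sub (integrable_const ε)) key
  rw [integral_sub hf1 (hmarg.const_mul ε), integral_sub hTint (integrable_const ε),
    integral_const_mul, integral_const, probReal_univ] at hle
  simp only [ENNReal.toReal_one, one_smul] at hle
  unfold Dfun
  rw [prod_exp_eq ρ₁ ρ₂ c hc M hM ε hε f hf hfexp g hg hgexp]
  linarith

lemma eq_transform (ρ₁ : Measure X) (ρ₂ : Measure Y)
    [IsProbabilityMeasure ρ₁] [IsProbabilityMeasure ρ₂]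
    (c : X → Y → ℝ) (hc : Measurable (Function.uncurry c))
    (M : ℝ) (hM : ∀ x y, |c x y| ≤ M) (ε : ℝ) (hε : 0 < ε)
    (g : Y → ℝ) (hg : Measurable g)
    (hgexp : Integrable (fun y => Real.exp (g y / ε)) ρ₂)
    (hgpos : 0 < ∫ y, Real.exp (g y / ε) ∂ρ₂) :
    Dfun ρ₁ ρ₂ c ε (transformY ρ₂ c ε g) g
      = (∫ x, transformY ρ₂ c ε g x ∂ρ₁) + (∫ y, g y ∂ρ₂) - ε := by
  have hcx : ∀ x, Measurable fun y => c x y := fun x => hc.comp measurable_prodMk_left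
  set B : X → ℝ := fun x => ∫ y, Real.exp ((g y - c x y) / ε) ∂ρ₂ with hBdef
  have hBpos : ∀ x, 0 < B x := fun x =>
    lt_of_lt_of_le (by positivity)
      (inner_bounds ρ₂ ε M hε (fun y => c x y) (hcx x) (fun y => hM x y) g hg hgexp).2.1
  have hTmeas : Measurable (transformY ρ₂ c ε g) := measurable_transformY ρ₂ c hc ε g hg
  have hTbd : ∀ x, |transformY ρ₂ c ε g x| ≤ M + |ε * Real.log (∫ y, Real.exp (g y / ε) ∂ρ₂)| := by
    intro x
    have h := log_int_bounds ρ₂ ε M hε (fun y => c x y) (hcx x) (fun y => hM x y) g hg hgexp hgpos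
    set L := ε * Real.log (∫ y, Real.exp (g y / ε) ∂ρ₂)
    calc |transformY ρ₂ c ε g x|
        = |(transformY ρ₂ c ε g x + L) + (-L)| := by congr 1; ring
      _ ≤ |transformY ρ₂ c ε g x + L| + |(-L)| := abs_add_le _ _
      _ ≤ M + |L| := by rw [abs_neg]; exact add_le_add_left h _
  have hTexp : Integrable (fun x => Real.exp (transformY ρ₂ c ε g x / ε)) ρ₁ := by
    refine (integrable_const
        (Real.exp ((M + |ε * Real.log (∫ y, Real.exp (g y / ε) ∂ρ₂)|) / ε))).mono'
      ((hTmeas.div_const ε).exp).aestronglyMeasurable (Filter.Eventually.of_forall fun x => ?_)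
    rw [Real.norm_eq_abs, Real.abs_exp]
    apply Real.exp_le_exp.2
    apply div_le_div_of_nonneg_right ?_ hε.le
    exact (abs_le.1 (hTbd x)).2
  unfold Dfun
  rw [prod_exp_eq ρ₁ ρ₂ c hc M hM ε hε _ hTmeas hTexp g hg hgexp]
  have hone : ∀ x, Real.exp (transformY ρ₂ c ε g x / ε) * B x = 1 := by
    intro x
    have hT : transformY ρ₂ c ε g x = -ε * Real.log (B x) := rfl
    have hdiv : transformY ρ₂ c ε g x / ε = -Real.log (B x) := by
      rw [hT]; field_simp
    rw [hdiv, Real.exp_neg, Real.exp_log (hBpos x), inv_mul_cancel₀ (hBpos x).ne']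
  simp only [hBdef] at hone
  simp only [hone]
  rw [integral_const, probReal_univ]
  simp

lemma Dfun_comm (ρ₁ : Measure X) (ρ₂ : Measure Y) [SFinite ρ₁] [SFinite ρ₂]
    (c : X → Y → ℝ) (ε : ℝ) (f : X → ℝ) (g : Y → ℝ) :
    Dfun ρ₁ ρ₂ c ε f g = Dfun ρ₂ ρ₁ (fun y x => c x y) ε g f := by
  unfold Dfun
  have hswap : ∫ p, Real.exp ((g p.1 + f p.2 - c p.2 p.1) / ε) ∂(ρ₂.prod ρ₁)
      = ∫ p, Real.exp ((f p.1 + g p.2 - c p.1 p.2) / ε) ∂(ρ₁.prod ρ₂) := by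
    rw [← MeasureTheory.integral_prod_swap
      (fun p : X × Y => Real.exp ((f p.1 + g p.2 - c p.1 p.2) / ε))]
    congr 1
    funext q
    simp only [Prod.fst_swap, Prod.snd_swap]
    congr 1
    ring
  rw [hswap]
  ring

lemma Dfun_shift (ρ₁ : Measure X) (ρ₂ : Measure Y)
    [IsProbabilityMeasure ρ₁] [IsProbabilityMeasure ρ₂]
    (c : X → Y → ℝ) (ε : ℝ) (u : X → ℝ) (v : Y → ℝ)
    (hu1 : Integrable u ρ₁) (hv1 : Integrable v ρ₂) (a : ℝ) :
    Dfun ρ₁ ρ₂ c ε u v = Dfun ρ₁ ρ₂ c ε (fun x => u x - a) (fun y => v y + a) := by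
  unfold Dfun
  have h1 : ∫ x, (u x - a) ∂ρ₁ = (∫ x, u x ∂ρ₁) - a := by
    rw [integral_sub hu1 (integrable_const a), integral_const, probReal_univ]; simp
  have h2 : ∫ y, (v y + a) ∂ρ₂ = (∫ y, v y ∂ρ₂) + a := by
    rw [integral_add hv1 (integrable_const a), integral_const, probReal_univ]; simp
  have h3 : (fun p : X × Y => Real.exp ((u p.1 - a + (v p.2 + a) - c p.1 p.2) / ε))
      = fun p : X × Y => Real.exp ((u p.1 + v p.2 - c p.1 p.2) / ε) := by
    funext p; congr 1; ring
  rw [h1, h2, h3]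
  ring

lemma transformY_shift (ρ₂ : Measure Y) (c : X → Y → ℝ)
    (hc : Measurable (Function.uncurry c))
    (M : ℝ) (hM : ∀ x y, |c x y| ≤ M) (ε : ℝ) (hε : 0 < ε)
    (g : Y → ℝ) (hg : Measurable g)
    (hgexp : Integrable (fun y => Real.exp (g y / ε)) ρ₂)
    (hgpos : 0 < ∫ y, Real.exp (g y / ε) ∂ρ₂) (t : ℝ) (x : X) :
    transformY ρ₂ c ε (fun y => g y + t) x = transformY ρ₂ c ε g x - t := by
  have hcx : Measurable fun y => c x y := hc.comp measurable_prodMk_left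
  have hBpos : 0 < ∫ y, Real.exp ((g y - c x y) / ε) ∂ρ₂ :=
    lt_of_lt_of_le (by positivity)
      (inner_bounds ρ₂ ε M hε (fun y => c x y) hcx (fun y => hM x y) g hg hgexp).2.1
  have h : (fun y => Real.exp ((g y + t - c x y) / ε))
      = fun y => Real.exp (t / ε) * Real.exp ((g y - c x y) / ε) := by
    funext y; rw [← Real.exp_add]; congr 1; ring
  show -ε * Real.log (∫ y, Real.exp ((g y + t - c x y) / ε) ∂ρ₂) = _ - t
  rw [h, integral_const_mul, Real.log_mul (Real.exp_ne_zero _) hBpos.ne', Real.log_exp]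
  have : transformY ρ₂ c ε g x = -ε * Real.log (∫ y, Real.exp ((g y - c x y) / ε) ∂ρ₂) := rfl
  rw [this]
  field_simp
  ring

end Aux

theorem better_potentials
    {X Y : Type*}
    [MeasurableSpace X] [TopologicalSpace X] [PolishSpace X] [BorelSpace X]
    [MeasurableSpace Y] [TopologicalSpace Y] [PolishSpace Y] [BorelSpace Y]
    (ρ₁ : Measure X) [IsProbabilityMeasure ρ₁]
    (ρ₂ : Measure Y) [IsProbabilityMeasure ρ₂]
    (ε : ℝ) (hε : 0 < ε)
    (c : X → Y → ℝ) (hc : Measurable (Function.uncurry c))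
    (M : ℝ) (hM : ∀ x y, |c x y| ≤ M)
    (u : X → ℝ) (hu : Measurable u) (hu1 : Integrable u ρ₁)
    (huexp : Integrable (fun x => Real.exp (u x / ε)) ρ₁)
    (hupos : 0 < ∫ x, Real.exp (u x / ε) ∂ρ₁)
    (v : Y → ℝ) (hv : Measurable v) (hv1 : Integrable v ρ₂)
    (hvexp : Integrable (fun y => Real.exp (v y / ε)) ρ₂)
    (hvpos : 0 < ∫ y, Real.exp (v y / ε) ∂ρ₂) :
    ∃ a : ℝ,
      (∀ x, |transformY ρ₂ c ε (fun y => v y + a) x| ≤ 3 / 2 * M) ∧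
      (∀ y, |transform ρ₁ c ε (transformY ρ₂ c ε (fun y' => v y' + a)) y| ≤ 3 / 2 * M) ∧
      Dfun ρ₁ ρ₂ c ε u v ≤
        Dfun ρ₁ ρ₂ c ε (transformY ρ₂ c ε (fun y => v y + a))
          (transform ρ₁ c ε (transformY ρ₂ c ε (fun y => v y + a))) := by
  have hMnn : 0 ≤ M := by
    have hne : Nonempty X := by
      by_contra h
      have h1 : (ρ₁ : Measure X) Set.univ = 1 := measure_univ
      rw [Set.univ_eq_empty_iff.2 (not_nonempty_iff.1 h), measure_empty] at h1
      exact one_ne_zero h1.symm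
    have hneY : Nonempty Y := by
      by_contra h
      have h1 : (ρ₂ : Measure Y) Set.univ = 1 := measure_univ
      rw [Set.univ_eq_empty_iff.2 (not_nonempty_iff.1 h), measure_empty] at h1
      exact one_ne_zero h1.symm
    obtain ⟨x⟩ := hne; obtain ⟨y⟩ := hneY
    exact (abs_nonneg _).trans (hM x y)
  set Zv := ∫ y, Real.exp (v y / ε) ∂ρ₂ with hZvdef
  set a₀ : ℝ := -ε * Real.log Zv with ha₀
  have hg₀meas : Measurable fun y => v y + a₀ := hv.add_const _
  have hg₀eq : (fun y => Real.exp ((v y + a₀) / ε))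
      = fun y => Real.exp (a₀ / ε) * Real.exp (v y / ε) := by
    funext y; rw [← Real.exp_add]; congr 1; ring
  have hg₀exp : Integrable (fun y => Real.exp ((v y + a₀) / ε)) ρ₂ := by
    rw [hg₀eq]; exact hvexp.const_mul _
  have hZ₀ : ∫ y, Real.exp ((v y + a₀) / ε) ∂ρ₂ = Real.exp (a₀ / ε) * Zv := by
    rw [hg₀eq, integral_const_mul]
  have hZ₀pos : 0 < ∫ y, Real.exp ((v y + a₀) / ε) ∂ρ₂ := by
    rw [hZ₀]; positivity
  have hlogZ₀ : Real.log (∫ y, Real.exp ((v y + a₀) / ε) ∂ρ₂) = 0 := by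
    rw [hZ₀, Real.log_mul (Real.exp_ne_zero _) hvpos.ne', Real.log_exp, ha₀]
    field_simp
    ring
  set u₀ := transformY ρ₂ c ε (fun y => v y + a₀) with hu₀def
  have hu₀meas : Measurable u₀ := measurable_transformY ρ₂ c hc ε _ hg₀meas
  have hu₀bd : ∀ x, |u₀ x| ≤ M := by
    intro x
    have h := log_int_bounds ρ₂ ε M hε (fun y => c x y) (hc.comp measurable_prodMk_left)
      (fun y => hM x y) _ hg₀meas hg₀exp hZ₀pos
    rw [hlogZ₀, mul_zero, add_zero] at h
    exact h
  have hu₀exp : Integrable (fun x => Real.exp (u₀ x / ε)) ρ₁ := by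
    refine (integrable_const (Real.exp (M / ε))).mono'
      ((hu₀meas.div_const ε).exp).aestronglyMeasurable (Filter.Eventually.of_forall fun x => ?_)
    rw [Real.norm_eq_abs, Real.abs_exp]
    exact Real.exp_le_exp.2 (div_le_div_of_nonneg_right (abs_le.1 (hu₀bd x)).2 hε.le)
  set W := ∫ x, Real.exp (u₀ x / ε) ∂ρ₁ with hWdef
  have hWlo : Real.exp (-M / ε) ≤ W := by
    have h := integral_mono (μ := ρ₁) (integrable_const (Real.exp (-M / ε))) hu₀exp
      (fun x => Real.exp_le_exp.2 (div_le_div_of_nonneg_right (abs_le.1 (hu₀bd x)).1 hε.le))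
    rwa [integral_const, probReal_univ, one_smul] at h
  have hWhi : W ≤ Real.exp (M / ε) := by
    have h := integral_mono (μ := ρ₁) hu₀exp (integrable_const (Real.exp (M / ε)))
      (fun x => Real.exp_le_exp.2 (div_le_div_of_nonneg_right (abs_le.1 (hu₀bd x)).2 hε.le))
    rwa [integral_const, probReal_univ, one_smul] at h
  have hWpos : 0 < W := lt_of_lt_of_le (Real.exp_pos _) hWlo
  set L := ε * Real.log W with hLdef
  have hL : |L| ≤ M := by
    have h1 : Real.log W ≤ M / ε := by
      have := Real.log_le_log hWpos hWhi; rwa [Real.log_exp] at this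
    have h2 : -M / ε ≤ Real.log W := by
      have := Real.log_le_log (Real.exp_pos _) hWlo; rwa [Real.log_exp] at this
    have h3 : ε * (M / ε) = M := by field_simp
    have h4 : ε * (-M / ε) = -M := by field_simp
    rw [abs_le]
    constructor
    · nlinarith [mul_le_mul_of_nonneg_left h2 hε.le]
    · nlinarith [mul_le_mul_of_nonneg_left h1 hε.le]
  set t : ℝ := max (-(M / 2)) (min (M / 2) (-L)) with htdef
  have ht1 : |t| ≤ M / 2 := by
    rw [abs_le]
    exact ⟨le_max_left _ _, max_le (by linarith) (min_le_left _ _)⟩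
  have ht2 : |t + L| ≤ M / 2 := by
    obtain ⟨hL1, hL2⟩ := abs_le.1 hL
    rcases le_total (-L) (-(M / 2)) with h | h
    · have hmin : min (M / 2) (-L) = -L := min_eq_right (by linarith)
      have hmax : t = -(M / 2) := by rw [htdef, hmin, max_eq_left h]
      rw [hmax, abs_le]; constructor <;> linarith
    · rcases le_total (-L) (M / 2) with h2 | h2
      · have hmin : min (M / 2) (-L) = -L := min_eq_right h2
        have hmax : t = -L := by rw [htdef, hmin, max_eq_right h]
        rw [hmax]; simp; linarith
      · have hmin : min (M / 2) (-L) = M / 2 := min_eq_left h2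
        have hmax : t = M / 2 := by rw [htdef, hmin, max_eq_right (by linarith)]
        rw [hmax, abs_le]; constructor <;> linarith
  have hueq : ∀ x, transformY ρ₂ c ε (fun y => v y + (a₀ - t)) x = u₀ x + t := by
    intro x
    have hgeq : (fun y => v y + (a₀ - t)) = fun y => (v y + a₀) + (-t) := by
      funext y; ring
    rw [hgeq]
    have h := transformY_shift ρ₂ c hc M hM ε hε (fun y => v y + a₀) hg₀meas hg₀exp hZ₀pos (-t) x
    exact h.trans (by rw [← hu₀def]; ring)
  have hbd1 : ∀ x, |transformY ρ₂ c ε (fun y => v y + (a₀ - t)) x| ≤ 3 / 2 * M := by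
    intro x
    rw [hueq x]
    calc |u₀ x + t| ≤ |u₀ x| + |t| := abs_add_le _ _
      _ ≤ M + M / 2 := add_le_add (hu₀bd x) ht1
      _ = 3 / 2 * M := by ring
  have hg1meas : Measurable fun y => v y + (a₀ - t) := hv.add_const _
  have hg1split : (fun y => Real.exp ((v y + (a₀ - t)) / ε))
      = fun y => Real.exp ((a₀ - t) / ε) * Real.exp (v y / ε) := by
    funext y; rw [← Real.exp_add]; congr 1; ring
  have hg1exp : Integrable (fun y => Real.exp ((v y + (a₀ - t)) / ε)) ρ₂ := by
    rw [hg1split]; exact hvexp.const_mul _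
  have hg1pos : 0 < ∫ y, Real.exp ((v y + (a₀ - t)) / ε) ∂ρ₂ := by
    rw [hg1split, integral_const_mul]; positivity
  have hg1int : Integrable (fun y => v y + (a₀ - t)) ρ₂ := hv1.add (integrable_const _)
  have hu₁meas : Measurable (transformY ρ₂ c ε (fun y => v y + (a₀ - t))) :=
    measurable_transformY ρ₂ c hc ε _ hg1meas
  have hu₁exp : Integrable
      (fun x => Real.exp (transformY ρ₂ c ε (fun y => v y + (a₀ - t)) x / ε)) ρ₁ := by
    refine (integrable_const (Real.exp (3 / 2 * M / ε))).mono'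
      ((hu₁meas.div_const ε).exp).aestronglyMeasurable (Filter.Eventually.of_forall fun x => ?_)
    rw [Real.norm_eq_abs, Real.abs_exp]
    exact Real.exp_le_exp.2 (div_le_div_of_nonneg_right (abs_le.1 (hbd1 x)).2 hε.le)
  have hW' : ∫ x, Real.exp (transformY ρ₂ c ε (fun y => v y + (a₀ - t)) x / ε) ∂ρ₁
      = Real.exp (t / ε) * W := by
    have heq : (fun x => Real.exp (transformY ρ₂ c ε (fun y => v y + (a₀ - t)) x / ε))
        = fun x => Real.exp (t / ε) * Real.exp (u₀ x / ε) := by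
      funext x; rw [hueq x, ← Real.exp_add]; congr 1; ring
    rw [heq, integral_const_mul]
  have hW'pos : 0 < ∫ x, Real.exp (transformY ρ₂ c ε (fun y => v y + (a₀ - t)) x / ε) ∂ρ₁ := by
    rw [hW']; positivity
  have hlogW' :
      ε * Real.log (∫ x, Real.exp (transformY ρ₂ c ε (fun y => v y + (a₀ - t)) x / ε) ∂ρ₁)
      = t + L := by
    rw [hW', Real.log_mul (Real.exp_ne_zero _) hWpos.ne', Real.log_exp, mul_add]
    have h5 : ε * (t / ε) = t := by field_simp
    rw [h5]
  have hbd2 : ∀ y,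
      |transform ρ₁ c ε (transformY ρ₂ c ε (fun y' => v y' + (a₀ - t))) y| ≤ 3 / 2 * M := by
    intro y
    have h := log_int_bounds ρ₁ ε M hε (fun x => c x y) (hc.comp measurable_prodMk_right)
      (fun x => hM x y) _ hu₁meas hu₁exp hW'pos
    rw [hlogW'] at h
    beta_reduce at h
    have hT : transform ρ₁ c ε (transformY ρ₂ c ε (fun y' => v y' + (a₀ - t))) y
        = -ε * Real.log (∫ x,
            Real.exp ((transformY ρ₂ c ε (fun y' => v y' + (a₀ - t)) x - c x y) / ε) ∂ρ₁) := rfl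
    rw [hT]
    obtain ⟨h1, h2⟩ := abs_le.1 h
    obtain ⟨h3, h4⟩ := abs_le.1 ht2
    rw [abs_le]
    constructor <;> linarith
  have hfmeas : Measurable fun x => u x - (a₀ - t) := hu.sub_const _
  have hf1 : Integrable (fun x => u x - (a₀ - t)) ρ₁ := hu1.sub (integrable_const _)
  have hfexp : Integrable (fun x => Real.exp ((u x - (a₀ - t)) / ε)) ρ₁ := by
    have heq : (fun x => Real.exp ((u x - (a₀ - t)) / ε))
        = fun x => Real.exp (-(a₀ - t) / ε) * Real.exp (u x / ε) := by
      funext x; rw [← Real.exp_add]; congr 1; ring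
    rw [heq]; exact huexp.const_mul _
  have hc' : Measurable (Function.uncurry (fun y x => c x y)) := hc.comp measurable_swap
  have hM' : ∀ y x, |(fun (y : Y) (x : X) => c x y) y x| ≤ M := fun y x => hM x y
  have htt : transformY ρ₁ (fun y x => c x y) ε (transformY ρ₂ c ε (fun y => v y + (a₀ - t)))
      = transform ρ₁ c ε (transformY ρ₂ c ε (fun y => v y + (a₀ - t))) := rfl
  refine ⟨a₀ - t, hbd1, hbd2, ?_⟩
  calc Dfun ρ₁ ρ₂ c ε u v
      = Dfun ρ₁ ρ₂ c ε (fun x => u x - (a₀ - t)) (fun y => v y + (a₀ - t)) :=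
        Dfun_shift ρ₁ ρ₂ c ε u v hu1 hv1 _
    _ ≤ (∫ x, transformY ρ₂ c ε (fun y => v y + (a₀ - t)) x ∂ρ₁)
          + (∫ y, (v y + (a₀ - t)) ∂ρ₂) - ε :=
        improve_left ρ₁ ρ₂ c hc M hM ε hε _ hfmeas hf1 hfexp _ hg1meas hg1exp hg1pos
    _ = Dfun ρ₁ ρ₂ c ε (transformY ρ₂ c ε (fun y => v y + (a₀ - t)))
          (fun y => v y + (a₀ - t)) :=
        (eq_transform ρ₁ ρ₂ c hc M hM ε hε _ hg1meas hg1exp hg1pos).symm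
    _ = Dfun ρ₂ ρ₁ (fun y x => c x y) ε (fun y => v y + (a₀ - t))
          (transformY ρ₂ c ε (fun y => v y + (a₀ - t))) :=
        Dfun_comm ρ₁ ρ₂ c ε _ _
    _ ≤ (∫ y, transformY ρ₁ (fun y x => c x y) ε
            (transformY ρ₂ c ε (fun y => v y + (a₀ - t))) y ∂ρ₂)
          + (∫ x, transformY ρ₂ c ε (fun y => v y + (a₀ - t)) x ∂ρ₁) - ε :=
        improve_left ρ₂ ρ₁ (fun y x => c x y) hc' M hM' ε hε _ hg1meas hg1int hg1exp _
          hu₁meas hu₁exp hW'pos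
    _ = Dfun ρ₂ ρ₁ (fun y x => c x y) ε
          (transformY ρ₁ (fun y x => c x y) ε (transformY ρ₂ c ε (fun y => v y + (a₀ - t))))
          (transformY ρ₂ c ε (fun y => v y + (a₀ - t))) :=
        (eq_transform ρ₂ ρ₁ (fun y x => c x y) hc' M hM' ε hε _ hu₁meas hu₁exp hW'pos).symm
    _ = Dfun ρ₁ ρ₂ c ε (transformY ρ₂ c ε (fun y => v y + (a₀ - t)))
          (transform ρ₁ c ε (transformY ρ₂ c ε (fun y => v y + (a₀ - t)))) := by
        rw [htt]
        exact (Dfun_comm ρ₁ ρ₂ c ε _ _).symm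

end
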